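/- For positive reals r1td, r2td, r1no, r2no, L1, L2, the optimal value of the LP minimizing t1 + t_no + t2 subject to t1·r1td + t_no·r1no = L1, t2·r2td + t_no·r2no = L2, t1, t2, t_no ≥ 0 equals L1/r1td + L2/r2td - max(λ, 0)·min(L1/r1no, L2/r2no), where λ := r1no/r1td + r2no/r2td - 1. -/

import Mathlib

/-- unified closed form (Proposition 1) of the minimum sum
transmission delay. -/
theorem stmt_4 (r1td r2td r1no r2no L1 L2 : ℝ)
    (hr1td : 0 < r1td) (hr2td : 0 < r2td) (hr1no : 0 < r1no) (hr2no : 0 < r2no)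
    (hL1 : 0 < L1) (hL2 : 0 < L2) :
    IsLeast {v : ℝ | ∃ t1 t2 tno : ℝ, 0 ≤ t1 ∧ 0 ≤ t2 ∧ 0 ≤ tno ∧
        t1 * r1td + tno * r1no = L1 ∧ t2 * r2td + tno * r2no = L2 ∧
        v = t1 + tno + t2}
      (L1 / r1td + L2 / r2td -
        max (r1no / r1td + r2no / r2td - 1) 0 *
          min (L1 / r1no) (L2 / r2no)) := by
  set lam := r1no / r1td + r2no / r2td - 1 with hlam
  set m := min (L1 / r1no) (L2 / r2no) with hm
  clear_value lam m
  have hm1 : m ≤ L1 / r1no := hm ▸ min_le_left _ _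
  have hm2 : m ≤ L2 / r2no := hm ▸ min_le_right _ _
  have hm0 : 0 ≤ m := hm ▸ le_min (le_of_lt (div_pos hL1 hr1no)) (le_of_lt (div_pos hL2 hr2no))
  constructor
  · rcases le_or_gt 0 lam with hl | hl
    · refine ⟨(L1 - m * r1no) / r1td, (L2 - m * r2no) / r2td, m, ?_, ?_, hm0, ?_, ?_, ?_⟩
      · apply div_nonneg _ hr1td.le
        have := (le_div_iff₀ hr1no).mp hm1
        linarith
      · apply div_nonneg _ hr2td.le
        have := (le_div_iff₀ hr2no).mp hm2
        linarith
      · field_simp; ring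
      · field_simp; ring
      · rw [max_eq_left hl, hlam]
        field_simp
        ring
    · refine ⟨L1 / r1td, L2 / r2td, 0, (div_pos hL1 hr1td).le, (div_pos hL2 hr2td).le,
        le_refl _, by field_simp; ring, by field_simp; ring, ?_⟩
      rw [max_eq_right hl.le]
      ring
  · rintro v ⟨t1, t2, tno, h1, h2, h3, e1, e2, rfl⟩
    have ht1 : t1 = (L1 - tno * r1no) / r1td := by
      field_simp; linarith
    have ht2 : t2 = (L2 - tno * r2no) / r2td := by
      field_simp; linarith
    have hv : t1 + tno + t2 = L1 / r1td + L2 / r2td - tno * lam := by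
      rw [ht1, ht2, hlam]; field_simp; ring
    rw [hv]
    have htm : tno ≤ m := by
      rw [hm]; apply le_min
      · rw [le_div_iff₀ hr1no]
        nlinarith [mul_nonneg h1 hr1td.le]
      · rw [le_div_iff₀ hr2no]
        nlinarith [mul_nonneg h2 hr2td.le]
    have : tno * lam ≤ max lam 0 * m := by
      rcases le_or_gt 0 lam with hl | hl
      · rw [max_eq_left hl]
        calc tno * lam ≤ m * lam := mul_le_mul_of_nonneg_right htm hl
          _ = lam * m := mul_comm _ _
      · rw [max_eq_right hl.le, zero_mul]
        exact mul_nonpos_of_nonneg_of_nonpos h3 hl.le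
    linarith
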